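/- For every integer i ≥ 1 and every finite alphabet A with |A| ≥ 2, the maximum cardinality of a code C ⊆ (A⁴)ⁱ that is unambiguous for the Scenario-A.2 i-shot Mirrored Diamond channel, taken over all choices of per-round node functions (f₁ʲ, f₂ʲ : A² → A for j = 1,…,i), equals |A|ⁱ. Equivalently, the i-shot capacity of the Mirrored Diamond Network when the adversary may change the attacked edge each round is 1, the same as its one-shot capacity. -/
import Mathlib


/-- A code `C` is unambiguous for the channel `Ω` if distinct codewords have
disjoint fan-out sets. -/
def Unambiguous {X Y : Type*} (Ω : X → Set Y) (C : Finset X) : Prop :=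
  ∀ x ∈ C, ∀ y ∈ C, x ≠ y → Ω x ∩ Ω y = ∅

/-- The `i`-shot Mirrored Diamond Network channel in Scenario A.2: in each
round the adversary may corrupt at most one of the four source edges, possibly
a different edge in different rounds.  Per-round node functions are
`f₁ʲ, f₂ʲ : A² → A`. -/
def mirroredDiamondA2Channel {A : Type*} [DecidableEq A] (i : ℕ)
    (f₁ : Fin i → A → A → A) (f₂ : Fin i → A → A → A)
    (x : Fin i → Fin 4 → A) : Set (Fin i → A × A) :=
  { z | ∃ y : Fin i → Fin 4 → A,
      (∀ j : Fin i, hammingDist (y j) (x j) ≤ 1) ∧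
      (∀ j : Fin i, z j = (f₁ j (y j 0) (y j 1), f₂ j (y j 2) (y j 3))) }

-- at most one coordinate differs
lemma two_diff {A : Type*} [DecidableEq A] {y : Fin 4 → A} {a : A}
    (h : hammingDist y (fun _ => a) ≤ 1) {k₁ k₂ : Fin 4} (hk : k₁ ≠ k₂)
    (h1 : y k₁ ≠ a) (h2 : y k₂ ≠ a) : False := by
  have : ({k₁, k₂} : Finset (Fin 4)) ⊆ Finset.univ.filter (fun k => y k ≠ a) := by
    intro k hk
    simp only [Finset.mem_insert, Finset.mem_singleton] at hk
    rcases hk with rfl | rfl <;> simp [h1, h2]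
  have hc : ({k₁, k₂} : Finset (Fin 4)).card ≤ 1 := le_trans (Finset.card_le_card this) h
  rw [Finset.card_insert_of_notMem (by simpa using hk), Finset.card_singleton] at hc
  omega

lemma key {A : Type*} [DecidableEq A] (e a : A) (y : Fin 4 → A)
    (h : hammingDist y (fun _ => a) ≤ 1) :
    ((if y 0 = y 1 then y 0 else e) = a ∨ (if y 0 = y 1 then y 0 else e) = e) ∧
    ((if y 2 = y 3 then y 2 else e) = a ∨ (if y 2 = y 3 then y 2 else e) = e) ∧
    ((if y 0 = y 1 then y 0 else e) = a ∨ (if y 2 = y 3 then y 2 else e) = a) := by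
  refine ⟨?_, ?_, ?_⟩
  · by_cases h01 : y 0 = y 1
    · by_cases h0 : y 0 = a
      · exact Or.inl (by rw [if_pos h01]; exact h0)
      · exact (two_diff h (by decide : (0:Fin 4) ≠ 1) h0
          (fun hh => h0 (h01.trans hh))).elim
    · exact Or.inr (if_neg h01)
  · by_cases h23 : y 2 = y 3
    · by_cases h2 : y 2 = a
      · exact Or.inl (by rw [if_pos h23]; exact h2)
      · exact (two_diff h (by decide : (2:Fin 4) ≠ 3) h2
          (fun hh => h2 (h23.trans hh))).elim
    · exact Or.inr (if_neg h23)
  · by_cases h0 : y 0 = a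
    · by_cases h1 : y 1 = a
      · exact Or.inl (by rw [if_pos (h0.trans h1.symm)]; exact h0)
      · have h2 : y 2 = a := by
          by_contra h2; exact two_diff h (by decide : (1:Fin 4) ≠ 2) h1 h2
        have h3 : y 3 = a := by
          by_contra h3; exact two_diff h (by decide : (1:Fin 4) ≠ 3) h1 h3
        exact Or.inr (by rw [if_pos (h2.trans h3.symm)]; exact h2)
    · have h2 : y 2 = a := by
        by_contra h2; exact two_diff h (by decide : (0:Fin 4) ≠ 2) h0 h2
      have h3 : y 3 = a := by
        by_contra h3; exact two_diff h (by decide : (0:Fin 4) ≠ 3) h0 h3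
      exact Or.inr (by rw [if_pos (h2.trans h3.symm)]; exact h2)


/-- Scenario A.2 multishot capacity of the Mirrored Diamond Network: the
maximum cardinality of an unambiguous code, over all choices of per-round node
functions, is `|A|^i`. -/
theorem mirrored_diamond_A2_multishot_capacity
    (A : Type*) [Fintype A] [DecidableEq A] (hA : 2 ≤ Fintype.card A)
    (i : ℕ) (hi : 1 ≤ i) :
    IsGreatest { n : ℕ |
        ∃ (f₁ : Fin i → A → A → A) (f₂ : Fin i → A → A → A)
          (C : Finset (Fin i → Fin 4 → A)),
          Unambiguous (mirroredDiamondA2Channel i f₁ f₂) C ∧ C.card = n }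
      (Fintype.card A ^ i) := by
  constructor
  · -- achievability
    have hne : Nonempty A := Fintype.card_pos_iff.mp (by omega)
    obtain ⟨e⟩ := hne
    set f : A → A → A := fun u v => if u = v then u else e with hf
    refine ⟨fun _ => f, fun _ => f,
      Finset.univ.image (fun a : Fin i → A => fun j (_ : Fin 4) => a j), ?_, ?_⟩
    · intro x hx y hy hxy
      simp only [Finset.mem_image, Finset.mem_univ, true_and] at hx hy
      obtain ⟨a, rfl⟩ := hx
      obtain ⟨b, rfl⟩ := hy
      have hab : a ≠ b := fun h => hxy (by rw [h])
      obtain ⟨j, hj⟩ := Function.ne_iff.mp hab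
      ext z
      simp only [Set.mem_inter_iff, Set.mem_empty_iff_false, iff_false]
      rintro ⟨⟨u, hu1, hu2⟩, ⟨v, hv1, hv2⟩⟩
      have ka := key e (a j) (u j) (hu1 j)
      have kb := key e (b j) (v j) (hv1 j)
      have ezu := hu2 j
      have ezv := hv2 j
      rw [ezu] at ezv
      have e1 : f (u j 0) (u j 1) = f (v j 0) (v j 1) := congrArg Prod.fst ezv
      have e2 : f (u j 2) (u j 3) = f (v j 2) (v j 3) := congrArg Prod.snd ezv
      obtain ⟨ka1, ka2, ka3⟩ := ka
      obtain ⟨kb1, kb2, kb3⟩ := kb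
      simp only [hf] at ka1 ka2 ka3 kb1 kb2 kb3 e1 e2
      rcases ka3 with hpa | hqa <;> rcases kb3 with hpb | hqb
      · exact hj (hpa.symm.trans (e1.trans hpb))
      · rcases ka2 with h | h
        · exact hj (h.symm.trans (e2.trans hqb))
        · have hbe : b j = e := hqb.symm.trans (e2.symm.trans h)
          rcases kb1 with h' | h'
          · exact hj (hpa.symm.trans (e1.trans h'))
          · have hae : a j = e := hpa.symm.trans (e1.trans h')
            exact hj (hae.trans hbe.symm)
      · rcases kb2 with h | h
        · exact hj (hqa.symm.trans (e2.trans h))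
        · have hae : a j = e := hqa.symm.trans (e2.trans h)
          rcases ka1 with h' | h'
          · exact hj (h'.symm.trans (e1.trans hpb))
          · have hbe : b j = e := hpb.symm.trans (e1.symm.trans h')
            exact hj (hae.trans hbe.symm)
      · exact hj (hqa.symm.trans (e2.trans hqb))
    · rw [Finset.card_image_of_injective _ ?_, Finset.card_univ, Fintype.card_fun]
      · simp
      · intro a b hab
        funext j
        exact congrFun (congrFun hab j) 0
  · -- upper bound
    rintro n ⟨f₁, f₂, C, hC, rfl⟩
    have hinj : Set.InjOn (fun x : Fin i → Fin 4 → A => fun j => f₂ j (x j 2) (x j 3)) C := by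
      intro x hx y hy hxy
      by_contra hne
      have hdisj := hC x hx y hy hne
      set z : Fin i → A × A := fun j => (f₁ j (y j 0) (x j 1), f₂ j (x j 2) (x j 3)) with hz
      have hzx : z ∈ mirroredDiamondA2Channel i f₁ f₂ x := by
        refine ⟨fun j => Function.update (x j) 0 (y j 0), fun j => ?_, fun j => ?_⟩
        · calc hammingDist (Function.update (x j) 0 (y j 0)) (x j)
              ≤ ({0} : Finset (Fin 4)).card := by
                apply Finset.card_le_card
                intro k hk
                simp only [Finset.mem_filter, Finset.mem_univ, true_and] at hk
                simp only [Finset.mem_singleton]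
                by_contra hk0
                exact hk (Function.update_of_ne hk0 _ _)
            _ = 1 := Finset.card_singleton _
        · simp [hz, Function.update_self, Function.update_of_ne (by decide : (1:Fin 4) ≠ 0),
            Function.update_of_ne (by decide : (2:Fin 4) ≠ 0),
            Function.update_of_ne (by decide : (3:Fin 4) ≠ 0)]
      have hzy : z ∈ mirroredDiamondA2Channel i f₁ f₂ y := by
        refine ⟨fun j => Function.update (y j) 1 (x j 1), fun j => ?_, fun j => ?_⟩
        · calc hammingDist (Function.update (y j) 1 (x j 1)) (y j)
              ≤ ({1} : Finset (Fin 4)).card := by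
                apply Finset.card_le_card
                intro k hk
                simp only [Finset.mem_filter, Finset.mem_univ, true_and] at hk
                simp only [Finset.mem_singleton]
                by_contra hk0
                exact hk (Function.update_of_ne hk0 _ _)
            _ = 1 := Finset.card_singleton _
        · have := congrFun hxy j
          simp only at this
          simp [hz, Function.update_self, Function.update_of_ne (by decide : (0:Fin 4) ≠ 1),
            Function.update_of_ne (by decide : (2:Fin 4) ≠ 1),
            Function.update_of_ne (by decide : (3:Fin 4) ≠ 1), ← this]
      have : z ∈ (∅ : Set (Fin i → A × A)) := hdisj ▸ ⟨hzx, hzy⟩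
      exact this
    calc C.card ≤ (Finset.univ : Finset (Fin i → A)).card :=
          Finset.card_le_card_of_injOn _ (fun _ _ => Finset.mem_univ _) hinj
      _ = Fintype.card A ^ i := by rw [Finset.card_univ, Fintype.card_fun]; simp
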